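/- Let θ ∈ (0,1]. There exists C > 0, depending only on θ, the polynomial degree k, and the shape regularity of the mesh, such that for every element Q of the parametric Bézier mesh and every measurable set S ⊂ Q with |S| ≥ θ|Q|, one has ‖p‖_{L^∞(Q)} ≤ C h^{−d/2} ‖p‖_{L²(S)} for all tensor-product polynomials p ∈ Q_k(R^d), where h is the diameter of Q. -/

import Mathlib

open Set Metric MeasureTheory

noncomputable section

/-- Euclidean space `ℝᵈ`. -/
abbrev Euc (d : ℕ) : Type := EuclideanSpace ℝ (Fin d)

/-- The open axis-aligned box with lower corner `a` and upper corner `b`. -/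
def box {d : ℕ} (a b : Fin d → ℝ) : Set (Euc d) :=
  {x : Euc d | ∀ i, x i ∈ Ioo (a i) (b i)}

/-- Tensor-product polynomial functions of coordinate degree at most `k`
(the space `Q_k(ℝᵈ)`). -/
def IsQPoly {d : ℕ} (k : ℕ) (f : Euc d → ℝ) : Prop :=
  ∃ P : MvPolynomial (Fin d) ℝ, (∀ i, P.degreeOf i ≤ k) ∧
    ∀ x : Euc d, f x = MvPolynomial.eval (fun i => x i) P



lemma mv_zero_set_null : ∀ (d : ℕ) (P : MvPolynomial (Fin d) ℝ), P ≠ 0 →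
    volume {x : Fin d → ℝ | MvPolynomial.eval x P = 0} = 0 := by
  intro d
  induction d with
  | zero =>
    intro P hP
    obtain ⟨c, rfl⟩ := MvPolynomial.C_surjective (Fin 0) P
    have hc : c ≠ 0 := fun h => hP (by simp [h])
    have h0 : {x : Fin 0 → ℝ | MvPolynomial.eval x (MvPolynomial.C c) = 0} = (∅ : Set _) := by
      ext x; simpa using hc
    rw [h0]; exact measure_empty
  | succ n ih =>
    intro P hP
    set Q := MvPolynomial.finSuccEquiv ℝ n P with hQdef
    have hQ : Q ≠ 0 := by
      simp only [hQdef, ne_eq, EmbeddingLike.map_eq_zero_iff]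
      exact hP
    have key : ∀ (x : Fin n → ℝ) (y : ℝ),
        Polynomial.eval y (Polynomial.map (MvPolynomial.eval x) Q)
          = (MvPolynomial.eval x) (Polynomial.eval (MvPolynomial.C y) Q) := by
      intro x y
      rw [Polynomial.eval_map,
        show (Polynomial.eval (MvPolynomial.C y) Q)
          = Polynomial.eval₂ (RingHom.id _) (MvPolynomial.C y) Q from rfl,
        Polynomial.hom_eval₂]
      simp
    set A : Set (ℝ × (Fin n → ℝ)) :=
      {p : ℝ × (Fin n → ℝ) | MvPolynomial.eval (Fin.cons p.1 p.2) P = 0} with hA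
    have hAmeas : MeasurableSet A := by
      have hcont : Continuous fun p : ℝ × (Fin n → ℝ) =>
          MvPolynomial.eval (Fin.cons p.1 p.2) P := by
        apply (MvPolynomial.continuous_eval P).comp
        apply continuous_pi
        intro i
        refine Fin.cases ?_ ?_ i
        · exact continuous_fst
        · intro j
          simpa [Function.comp_def] using (continuous_apply j).comp continuous_snd
      exact hcont.measurable (measurableSet_singleton 0)
    have hslice : volume A = 0 := by
      rw [show (volume : Measure (ℝ × (Fin n → ℝ))) = (volume : Measure ℝ).prod volume from rfl]
      rw [Measure.measure_prod_null hAmeas]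
      have hbad : {y : ℝ | Polynomial.eval (MvPolynomial.C y) Q = 0}.Finite := by
        have hsub : {y : ℝ | Polynomial.eval (MvPolynomial.C y) Q = 0}
            ⊆ (MvPolynomial.C : ℝ →+* MvPolynomial (Fin n) ℝ) ⁻¹' {c | Q.IsRoot c} :=
          fun y hy => hy
        refine Set.Finite.subset ((Polynomial.finite_setOf_isRoot hQ).preimage ?_) hsub
        exact Function.Injective.injOn (MvPolynomial.C_injective _ _)
      have hae : ∀ᵐ y : ℝ, Polynomial.eval (MvPolynomial.C y) Q ≠ 0 := by
        rw [Filter.eventually_iff, mem_ae_iff]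
        have hcompl : {y : ℝ | Polynomial.eval (MvPolynomial.C y) Q ≠ 0}ᶜ
            = {y : ℝ | Polynomial.eval (MvPolynomial.C y) Q = 0} := by
          ext y; simp
        rw [hcompl]
        exact hbad.measure_zero _
      filter_upwards [hae] with y hy
      have hsl : (Prod.mk y ⁻¹' A) = {x : Fin n → ℝ |
          MvPolynomial.eval x (Polynomial.eval (MvPolynomial.C y) Q) = 0} := by
        ext x
        simp only [Set.mem_preimage, Set.mem_setOf_eq, hA]
        rw [MvPolynomial.eval_eq_eval_mv_eval' x y P, ← hQdef, key x y]
      simp only [Pi.zero_apply]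
      rw [hsl]
      exact ih _ hy
    have hmp := volume_preserving_piFinSuccAbove (fun _ : Fin (n+1) => ℝ) 0
    have hpre : {x : Fin (n+1) → ℝ | MvPolynomial.eval x P = 0}
        = (MeasurableEquiv.piFinSuccAbove (fun _ : Fin (n+1) => ℝ) 0) ⁻¹' A := by
      ext x
      have he : (MeasurableEquiv.piFinSuccAbove (fun _ : Fin (n+1) => ℝ) 0) x
          = (x 0, fun j => x ((0:Fin (n+1)).succAbove j)) := rfl
      simp only [Set.mem_setOf_eq, Set.mem_preimage, hA, he]
      have hx : Fin.cons (x 0) (fun j => x ((0 : Fin (n+1)).succAbove j)) = x := by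
        have ht : (fun j => x ((0 : Fin (n+1)).succAbove j)) = Fin.tail x := by
          funext j; simp [Fin.succAbove, Fin.tail]
        rw [ht, Fin.cons_self_tail]
      rw [hx]
    rw [hpre, hmp.measure_preimage hAmeas.nullMeasurableSet]
    exact hslice



variable {d k : ℕ}

/-- exponent multi-indices -/
abbrev Idx (d k : ℕ) := Fin d → Fin (k+1)

def expE (d k : ℕ) : Idx d k → (Fin d →₀ ℕ) :=
  fun m => Finsupp.equivFunOnFinite.symm (fun i => (m i : ℕ))

lemma expE_apply (m : Idx d k) (i : Fin d) : expE d k m i = (m i : ℕ) := rfl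

lemma expE_inj : Function.Injective (expE d k) := by
  intro m m' h
  funext i
  have := congrFun (congrArg (fun f : Fin d →₀ ℕ => (f : Fin d → ℕ)) h) i
  simpa [expE_apply, Fin.val_injective.eq_iff] using Fin.val_injective this

/-- evaluation of a coefficient vector -/
def ev (d k : ℕ) (c : Idx d k → ℝ) (x : Fin d → ℝ) : ℝ :=
  ∑ m : Idx d k, c m * ∏ i, x i ^ (m i : ℕ)

def toPoly (d k : ℕ) (c : Idx d k → ℝ) : MvPolynomial (Fin d) ℝ :=
  ∑ m : Idx d k, MvPolynomial.monomial (expE d k m) (c m)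

lemma eval_toPoly (c : Idx d k → ℝ) (x : Fin d → ℝ) :
    MvPolynomial.eval x (toPoly d k c) = ev d k c x := by
  rw [toPoly, map_sum, ev]
  refine Finset.sum_congr rfl fun m _ => ?_
  rw [MvPolynomial.eval_monomial]
  congr 1
  rw [Finsupp.prod_fintype]
  · exact Finset.prod_congr rfl fun i _ => by rw [expE_apply]
  · intro i; exact pow_zero _

lemma coeff_toPoly (c : Idx d k → ℝ) (m : Idx d k) :
    MvPolynomial.coeff (expE d k m) (toPoly d k c) = c m := by
  classical
  rw [toPoly, MvPolynomial.coeff_sum]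
  rw [Finset.sum_eq_single m]
  · simp [MvPolynomial.coeff_monomial]
  · intro m' _ hne
    rw [MvPolynomial.coeff_monomial, if_neg (fun h => hne (expE_inj h))]
  · simp

lemma toPoly_ne_zero {c : Idx d k → ℝ} (hc : c ≠ 0) : toPoly d k c ≠ 0 := by
  intro h
  apply hc
  funext m
  have := coeff_toPoly c m
  rw [h] at this
  simpa using this.symm

lemma coeff_toPoly_not_mem {c : Idx d k → ℝ} {s : Fin d →₀ ℕ}
    (hs : ∀ m : Idx d k, expE d k m ≠ s) : MvPolynomial.coeff s (toPoly d k c) = 0 := by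
  classical
  rw [toPoly, MvPolynomial.coeff_sum]
  refine Finset.sum_eq_zero fun m _ => ?_
  rw [MvPolynomial.coeff_monomial, if_neg (hs m)]

lemma degreeOf_toPoly (c : Idx d k → ℝ) (i : Fin d) :
    MvPolynomial.degreeOf i (toPoly d k c) ≤ k := by
  rw [MvPolynomial.degreeOf_le_iff]
  intro s hs
  by_contra hlt
  push_neg at hlt
  have : MvPolynomial.coeff s (toPoly d k c) = 0 := by
    refine coeff_toPoly_not_mem fun m hm => ?_
    have := congrArg (fun f : Fin d →₀ ℕ => f i) hm
    simp only [expE_apply] at this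
    have hk := (m i).isLt
    omega
  exact (MvPolynomial.mem_support_iff.mp hs) this

lemma exists_repr {P : MvPolynomial (Fin d) ℝ} (hP : ∀ i, P.degreeOf i ≤ k) :
    ∃ c : Idx d k → ℝ, toPoly d k c = P := by
  classical
  refine ⟨fun m => MvPolynomial.coeff (expE d k m) P, ?_⟩
  apply MvPolynomial.ext
  intro s
  by_cases hs : ∃ m : Idx d k, expE d k m = s
  · obtain ⟨m, rfl⟩ := hs
    rw [coeff_toPoly]
  · push_neg at hs
    rw [coeff_toPoly_not_mem hs]
    by_contra h
    have hmem : s ∈ P.support := MvPolynomial.mem_support_iff.mpr fun hh => h hh.symm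
    have hle : ∀ i, s i ≤ k := fun i =>
      (MvPolynomial.degreeOf_le_iff.mp (hP i)) s hmem
    exact hs (fun i => ⟨s i, Nat.lt_succ_of_le (hle i)⟩) (by
      apply Finsupp.ext
      intro i
      rw [expE_apply])
variable {d k : ℕ}

def ucube (d : ℕ) : Set (Fin d → ℝ) := Set.pi Set.univ fun _ => Ioo (0:ℝ) 1

lemma ucube_measurable : MeasurableSet (ucube d) :=
  MeasurableSet.univ_pi fun _ => measurableSet_Ioo

lemma volume_ucube : volume (ucube d) = 1 := by
  rw [ucube, volume_pi_pi]; simp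

lemma mem_ucube {x : Fin d → ℝ} : x ∈ ucube d ↔ ∀ i, x i ∈ Ioo (0:ℝ) 1 := by
  simp [ucube]

lemma ev_sub (c c' : Idx d k → ℝ) (x : Fin d → ℝ) :
    ev d k (c - c') x = ev d k c x - ev d k c' x := by
  simp [ev, sub_mul, Finset.sum_sub_distrib]

lemma ev_smul (t : ℝ) (c : Idx d k → ℝ) (x : Fin d → ℝ) :
    ev d k (t • c) x = t * ev d k c x := by
  simp [ev, Finset.mul_sum, mul_assoc]

lemma continuous_ev (c : Idx d k → ℝ) : Continuous (ev d k c) := by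
  refine continuous_finset_sum _ fun m _ => ?_
  exact continuous_const.mul (continuous_finset_prod _ fun i _ => (continuous_apply i).pow _)

lemma abs_ev_le (c : Idx d k → ℝ) {x : Fin d → ℝ} (hx : x ∈ ucube d) :
    |ev d k c x| ≤ (Fintype.card (Idx d k) : ℝ) * ‖c‖ := by
  rw [ev]
  calc |∑ m : Idx d k, c m * ∏ i, x i ^ (m i : ℕ)|
      ≤ ∑ m : Idx d k, |c m * ∏ i, x i ^ (m i : ℕ)| := Finset.abs_sum_le_sum_abs _ _
    _ ≤ ∑ _m : Idx d k, ‖c‖ := by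
        refine Finset.sum_le_sum fun m _ => ?_
        rw [abs_mul]
        have h1 : |c m| ≤ ‖c‖ := by
          simpa using norm_le_pi_norm c m
        have h2 : |∏ i, x i ^ (m i : ℕ)| ≤ 1 := by
          rw [abs_of_nonneg (Finset.prod_nonneg fun i _ =>
            pow_nonneg (le_of_lt (mem_ucube.mp hx i).1) _)]
          refine Finset.prod_le_one (fun i _ => pow_nonneg (le_of_lt (mem_ucube.mp hx i).1) _)
            (fun i _ => pow_le_one₀ (le_of_lt (mem_ucube.mp hx i).1)
              (le_of_lt (mem_ucube.mp hx i).2))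
        calc |c m| * |∏ i, x i ^ (m i : ℕ)| ≤ ‖c‖ * 1 :=
              mul_le_mul h1 h2 (abs_nonneg _) (norm_nonneg _)
          _ = ‖c‖ := mul_one _
    _ = (Fintype.card (Idx d k) : ℝ) * ‖c‖ := by
        rw [Finset.sum_const, Finset.card_univ, nsmul_eq_mul]

lemma integrableOn_ev_sq (c : Idx d k → ℝ) {S : Set (Fin d → ℝ)}
    (hSm : MeasurableSet S) (hSc : S ⊆ ucube d) :
    IntegrableOn (fun x => ev d k c x ^ 2) S := by
  have hvol : volume S ≠ ⊤ := by
    refine ne_top_of_le_ne_top ?_ (measure_mono hSc)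
    rw [volume_ucube]; exact ENNReal.one_ne_top
  refine Measure.integrableOn_of_bounded hvol
    (((continuous_ev c).pow 2).aestronglyMeasurable)
    (M := ((Fintype.card (Idx d k) : ℝ) * ‖c‖)^2) ?_
  filter_upwards [ae_restrict_mem hSm] with x hx
  have h := abs_ev_le c (hSc hx)
  rw [Real.norm_eq_abs, abs_pow]
  exact pow_le_pow_left₀ (abs_nonneg _) h 2

theorem unit_cube_bound (d k : ℕ) (θ : ℝ) (hθ0 : 0 < θ) (hθ1 : θ ≤ 1)
    (hzero : ∀ c : Idx d k → ℝ, c ≠ 0 → volume {x : Fin d → ℝ | ev d k c x = 0} = 0) :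
    ∃ ε > (0:ℝ), ∀ (c : Idx d k → ℝ) (S : Set (Fin d → ℝ)),
      MeasurableSet S → S ⊆ ucube d → θ ≤ (volume S).toReal →
      ε * ‖c‖^2 ≤ ∫ x in S, ev d k c x ^ 2 := by
  classical
  set N : ℝ := (Fintype.card (Idx d k) : ℝ) with hN
  have hN0 : 0 ≤ N := Nat.cast_nonneg _
  set 𝒮 := {S : Set (Fin d → ℝ) // MeasurableSet S ∧ S ⊆ ucube d ∧ θ ≤ (volume S).toReal}
    with h𝒮
  haveI : Nonempty 𝒮 := ⟨⟨ucube d, ucube_measurable, subset_rfl, by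
    rw [volume_ucube]; simpa using hθ1⟩⟩
  set g : (Idx d k → ℝ) → ℝ := fun c => ⨅ S : 𝒮, ∫ x in S.1, ev d k c x ^ 2 with hg
  have hvolfin : ∀ S : Set (Fin d → ℝ), S ⊆ ucube d → volume S ≤ 1 := fun S hS => by
    calc volume S ≤ volume (ucube d) := measure_mono hS
      _ = 1 := volume_ucube
  have hvolne : ∀ S : Set (Fin d → ℝ), S ⊆ ucube d → volume S ≠ ⊤ := fun S hS =>
    ne_top_of_le_ne_top ENNReal.one_ne_top (hvolfin S hS)
  have hBdd : ∀ c : Idx d k → ℝ,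
      BddBelow (Set.range fun S : 𝒮 => ∫ x in S.1, ev d k c x ^ 2) := fun c =>
    ⟨0, by rintro y ⟨S, rfl⟩; exact integral_nonneg fun x => sq_nonneg _⟩
  have hg_le : ∀ (c : Idx d k → ℝ) (S : 𝒮), g c ≤ ∫ x in S.1, ev d k c x ^ 2 :=
    fun c S => ciInf_le (hBdd c) S
  have hle_g : ∀ (c : Idx d k → ℝ) (b : ℝ), (∀ S : 𝒮, b ≤ ∫ x in S.1, ev d k c x ^ 2) →
      b ≤ g c := fun c b h => le_ciInf h
  -- Lipschitz-type estimate
  have hdiff : ∀ (c c' : Idx d k → ℝ) (S : 𝒮), (∫ x in S.1, ev d k c x ^ 2)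
      ≤ (∫ x in S.1, ev d k c' x ^ 2) + N^2 * (‖c‖ + ‖c'‖) * ‖c - c'‖ := by
    intro c c' S
    obtain ⟨hSm, hSc, hSθ⟩ := S.2
    have hint := integrableOn_ev_sq c hSm hSc
    have hint' := integrableOn_ev_sq c' hSm hSc
    have hsub : (∫ x in S.1, (ev d k c x ^ 2 - ev d k c' x ^ 2))
        = (∫ x in S.1, ev d k c x ^ 2) - ∫ x in S.1, ev d k c' x ^ 2 :=
      integral_sub hint hint'
    have hbnd : ‖∫ x in S.1, (ev d k c x ^ 2 - ev d k c' x ^ 2)‖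
        ≤ (N^2 * (‖c‖ + ‖c'‖) * ‖c - c'‖) * (volume S.1).toReal := by
      refine norm_setIntegral_le_of_norm_le_const (lt_of_le_of_lt (hvolfin _ hSc) ?_) ?_
      · exact ENNReal.one_lt_top
      · intro x hx
        have hx' := hSc hx
        rw [Real.norm_eq_abs, sq_sub_sq, abs_mul]
        have h1 : |ev d k c x + ev d k c' x| ≤ N * ‖c‖ + N * ‖c'‖ :=
          (abs_add_le _ _).trans (add_le_add (abs_ev_le c hx') (abs_ev_le c' hx'))
        have h2 : |ev d k c x - ev d k c' x| ≤ N * ‖c - c'‖ := by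
          rw [← ev_sub]; exact abs_ev_le _ hx'
        calc |ev d k c x + ev d k c' x| * |ev d k c x - ev d k c' x|
            ≤ (N * ‖c‖ + N * ‖c'‖) * (N * ‖c - c'‖) :=
              mul_le_mul h1 h2 (abs_nonneg _) (by positivity)
          _ = N^2 * (‖c‖ + ‖c'‖) * ‖c - c'‖ := by ring
    have hμ : (volume S.1).toReal ≤ 1 := by
      simpa using ENNReal.toReal_mono ENNReal.one_ne_top (hvolfin _ hSc)
    have habs : (∫ x in S.1, ev d k c x ^ 2) - (∫ x in S.1, ev d k c' x ^ 2)
        ≤ (N^2 * (‖c‖ + ‖c'‖) * ‖c - c'‖) * (volume S.1).toReal := by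
      rw [← hsub]
      exact (le_abs_self _).trans (by rwa [← Real.norm_eq_abs])
    nlinarith [norm_nonneg (c - c'), norm_nonneg c, norm_nonneg c', sq_nonneg N,
      mul_nonneg (mul_nonneg (mul_nonneg (sq_nonneg N) (add_nonneg (norm_nonneg c) (norm_nonneg c'))) (norm_nonneg (c - c'))) (ENNReal.toReal_nonneg (a := volume S.1))]
  have hg_diff : ∀ c c' : Idx d k → ℝ, g c ≤ g c' + N^2 * (‖c‖ + ‖c'‖) * ‖c - c'‖ := by
    intro c c'
    have h1 : g c - N^2 * (‖c‖ + ‖c'‖) * ‖c - c'‖ ≤ g c' := by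
      refine hle_g c' _ fun S => ?_
      have := (hg_le c S).trans (hdiff c c' S)
      linarith
    linarith
  -- continuity on the sphere
  have hcont : ContinuousOn g (sphere (0 : Idx d k → ℝ) 1) := by
    rw [Metric.continuousOn_iff]
    intro c hc ε hε
    refine ⟨ε / (2 * N^2 + 1), by positivity, fun c' hc' hd => ?_⟩
    have hnc : ‖c‖ = 1 := by simpa using hc
    have hnc' : ‖c'‖ = 1 := by simpa using hc'
    have h1 := hg_diff c c'
    have h2 := hg_diff c' c
    rw [hnc, hnc'] at h1 h2
    have hsymm : ‖c' - c‖ = ‖c - c'‖ := norm_sub_rev _ _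
    rw [hsymm] at h2
    have hdist : dist c' c = ‖c' - c‖ := dist_eq_norm _ _
    rw [Real.dist_eq]
    rw [hdist, hsymm] at hd
    have hN2 : 0 ≤ N^2 := sq_nonneg N
    have : |g c' - g c| ≤ 2 * N^2 * ‖c - c'‖ := by
      rw [abs_le]
      constructor <;> nlinarith
    calc |g c' - g c| ≤ 2 * N^2 * ‖c - c'‖ := this
      _ ≤ (2 * N^2 + 1) * ‖c - c'‖ := by nlinarith [norm_nonneg (c - c')]
      _ < (2 * N^2 + 1) * (ε / (2 * N^2 + 1)) :=
          mul_lt_mul_of_pos_left hd (by positivity)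
      _ = ε := by field_simp
  -- positivity of g on nonzero vectors
  have hg_pos : ∀ c : Idx d k → ℝ, c ≠ 0 → 0 < g c := by
    intro c hc
    have hnull : volume {x : Fin d → ℝ | ev d k c x = 0} = 0 := hzero c hc
    set B : ℕ → Set (Fin d → ℝ) := fun n => ucube d ∩ {x | ev d k c x ^ 2 ≤ 1/(n+1)} with hB
    have hBm : ∀ n, MeasurableSet (B n) := fun n =>
      ucube_measurable.inter (((continuous_ev c).pow 2).measurable measurableSet_Iic)
    have hBanti : Antitone B := by
      intro m n hmn
      refine inter_subset_inter_right _ fun x hx => ?_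
      simp only [Set.mem_setOf_eq] at hx ⊢
      refine hx.trans ?_
      have h1 : (m:ℝ) + 1 ≤ (n:ℝ) + 1 := by exact_mod_cast Nat.add_le_add_right hmn 1
      have h2 : (0:ℝ) < m + 1 := by positivity
      exact one_div_le_one_div_of_le h2 h1
    have hInter : (⋂ n, B n) ⊆ {x | ev d k c x = 0} := by
      intro x hx
      simp only [Set.mem_iInter, hB, Set.mem_inter_iff, Set.mem_setOf_eq] at hx
      simp only [Set.mem_setOf_eq]
      by_contra hne
      have hpos : 0 < ev d k c x ^ 2 := pow_two_pos_of_ne_zero hne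
      obtain ⟨n, hn⟩ := exists_nat_one_div_lt hpos
      exact absurd ((hx n).2) (not_le.mpr (by exact_mod_cast hn))
    have htend := tendsto_measure_iInter_atTop (μ := volume)
      (fun n => (hBm n).nullMeasurableSet) hBanti
      ⟨0, hvolne _ (Set.inter_subset_left)⟩
    have hlim0 : volume (⋂ n, B n) = 0 :=
      le_antisymm ((measure_mono hInter).trans hnull.le) zero_le
    rw [hlim0] at htend
    have hev : ∀ᶠ n in Filter.atTop, volume (B n) < ENNReal.ofReal (θ/2) :=
      htend.eventually_lt_const (by
        simp only [ENNReal.ofReal_pos]; linarith)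
    obtain ⟨n, hn⟩ := hev.exists
    set t : ℝ := 1/(n+1) with ht'
    have ht : 0 < t := by positivity
    refine lt_of_lt_of_le (show (0:ℝ) < t * (θ/2) by positivity) (hle_g c _ fun S => ?_)
    obtain ⟨hSm, hSc, hSθ⟩ := S.2
    set S' := S.1 \ B n with hS'
    have hS'm : MeasurableSet S' := hSm.diff (hBm n)
    have hS'c : S' ⊆ ucube d := (Set.diff_subset).trans hSc
    -- volume estimate
    have hvol' : θ/2 ≤ (volume S').toReal := by
      have hcover : S.1 ⊆ S' ∪ B n := fun x hx => by
        by_cases hxB : x ∈ B n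
        · exact Or.inr hxB
        · exact Or.inl ⟨hx, hxB⟩
      have h1 : volume S.1 ≤ volume S' + volume (B n) :=
        (measure_mono hcover).trans (measure_union_le _ _)
      have h2 : (volume S.1).toReal ≤ (volume S').toReal + (volume (B n)).toReal := by
        rw [← ENNReal.toReal_add (hvolne _ hS'c) (hvolne _ Set.inter_subset_left)]
        exact ENNReal.toReal_mono (by
          exact ENNReal.add_ne_top.mpr ⟨hvolne _ hS'c, hvolne _ Set.inter_subset_left⟩) h1
      have h3 : (volume (B n)).toReal < θ/2 := by
        have := (ENNReal.toReal_lt_toReal (hvolne _ Set.inter_subset_left)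
          ENNReal.ofReal_ne_top).mpr hn
        rwa [ENNReal.toReal_ofReal (by linarith)] at this
      linarith
    have hlower : ∀ x ∈ S', t ≤ ev d k c x ^ 2 := by
      intro x hx
      have hxu : x ∈ ucube d := hSc hx.1
      have hxB : x ∉ B n := hx.2
      by_contra hlt
      exact hxB ⟨hxu, le_of_not_gt (fun hh => hlt (le_of_lt hh))⟩
    calc t * (θ/2) ≤ t * (volume S').toReal := by
          have := hvol'; nlinarith
      _ ≤ ∫ x in S', ev d k c x ^ 2 :=
          setIntegral_ge_of_const_le_real hS'm (hvolne _ hS'c) hlower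
            ((integrableOn_ev_sq c hSm hSc).mono_set Set.diff_subset)
      _ ≤ ∫ x in S.1, ev d k c x ^ 2 := by
          refine setIntegral_mono_set (integrableOn_ev_sq c hSm hSc) ?_ ?_
          · filter_upwards with x using sq_nonneg _
          · exact HasSubset.Subset.eventuallyLE Set.diff_subset
  -- minimum on the sphere
  obtain ⟨c₀, hc₀s, hmin⟩ := (isCompact_sphere (0 : Idx d k → ℝ) 1).exists_isMinOn
    (NormedSpace.sphere_nonempty.mpr zero_le_one) hcont
  have hc₀ : c₀ ≠ 0 := by
    intro h
    have : ‖c₀‖ = 1 := by simpa using hc₀s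
    rw [h] at this; simp at this
  refine ⟨g c₀, hg_pos c₀ hc₀, fun c S hSm hSc hSθ => ?_⟩
  by_cases hc : c = 0
  · subst hc
    simp only [norm_zero, ne_eq, OfNat.ofNat_ne_zero, not_false_eq_true, zero_pow, mul_zero]
    exact integral_nonneg fun x => sq_nonneg _
  · set u := ‖c‖⁻¹ • c with hu
    have hun : ‖u‖ = 1 := norm_smul_inv_norm hc
    have hcu : c = ‖c‖ • u := (smul_inv_smul₀ (norm_ne_zero_iff.mpr hc) c).symm
    have hev : ∀ x, ev d k c x ^ 2 = ‖c‖^2 * ev d k u x ^ 2 := by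
      intro x
      rw [hcu, ev_smul]
      ring_nf
      rw [← hcu]
      ring
    have hS : (⟨S, hSm, hSc, hSθ⟩ : 𝒮) = ⟨S, hSm, hSc, hSθ⟩ := rfl
    have h1 : g c₀ ≤ g u := hmin (by simpa using hun)
    have h2 : g u ≤ ∫ x in S, ev d k u x ^ 2 := hg_le u ⟨S, hSm, hSc, hSθ⟩
    calc g c₀ * ‖c‖^2 ≤ (∫ x in S, ev d k u x ^ 2) * ‖c‖^2 := by
          nlinarith [sq_nonneg ‖c‖]
      _ = ∫ x in S, ev d k c x ^ 2 := by
          rw [← integral_mul_const]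
          refine setIntegral_congr_fun hSm fun x _ => ?_
          rw [hev x]; ring
variable {d : ℕ}

def Tmap (a L : Fin d → ℝ) : (Fin d → ℝ) → (Fin d → ℝ) := fun x i => a i + L i * x i

def Dmap (L : Fin d → ℝ) : (Fin d → ℝ) →L[ℝ] (Fin d → ℝ) :=
  ContinuousLinearMap.pi fun i => L i • ContinuousLinearMap.proj i

lemma Dmap_det (L : Fin d → ℝ) : (Dmap L).det = ∏ i, L i := by
  have h : LinearMap.toMatrix (Pi.basisFun ℝ (Fin d)) (Pi.basisFun ℝ (Fin d))
      ((Dmap L) : (Fin d → ℝ) →ₗ[ℝ] (Fin d → ℝ)) = Matrix.diagonal L := by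
    ext i j
    simp [LinearMap.toMatrix_apply, Dmap, Matrix.diagonal, Pi.single_apply, eq_comm]
  rw [ContinuousLinearMap.det, ← LinearMap.det_toMatrix (Pi.basisFun ℝ (Fin d)), h,
    Matrix.det_diagonal]

lemma Tmap_hasFDeriv (a L : Fin d → ℝ) (s : Set (Fin d → ℝ)) (x : Fin d → ℝ) :
    HasFDerivWithinAt (Tmap a L) (Dmap L) s x := by
  have : HasFDerivAt (Tmap a L) (Dmap L) x := by
    have h2 : Tmap a L = fun x => a + (Dmap L) x := by
      funext x i; rfl
    rw [h2]
    exact (Dmap L).hasFDerivAt.const_add a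
  exact this.hasFDerivWithinAt

lemma Tmap_inj {L : Fin d → ℝ} (hL : ∀ i, 0 < L i) (a : Fin d → ℝ) :
    Function.Injective (Tmap a L) := by
  intro x y h
  funext i
  have := congrFun h i
  simp only [Tmap] at this
  have hLi := (hL i).ne'
  have h2 : L i * x i = L i * y i := by linarith
  exact mul_left_cancel₀ hLi h2

lemma Tmap_surj {L : Fin d → ℝ} (hL : ∀ i, 0 < L i) (a : Fin d → ℝ) :
    Function.Surjective (Tmap a L) := by
  intro y
  refine ⟨fun i => (y i - a i) / L i, ?_⟩
  funext i
  simp only [Tmap]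
  have hLi := (hL i).ne'
  field_simp
  ring

lemma Tmap_cov (a : Fin d → ℝ) {L : Fin d → ℝ} (hL : ∀ i, 0 < L i)
    {s : Set (Fin d → ℝ)} (hs : MeasurableSet s) (g : (Fin d → ℝ) → ℝ) :
    ∫ y in Tmap a L '' s, g y = (∏ i, L i) * ∫ x in s, g (Tmap a L x) := by
  rw [integral_image_eq_integral_abs_det_fderiv_smul volume hs
    (fun x _ => Tmap_hasFDeriv a L s x) ((Tmap_inj hL a).injOn) g]
  simp only [Dmap_det, abs_of_pos (Finset.prod_pos fun i (_ : i ∈ Finset.univ) => hL i),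
    smul_eq_mul]
  exact integral_const_mul _ _

lemma Tmap_vol (a : Fin d → ℝ) {L : Fin d → ℝ} (hL : ∀ i, 0 < L i)
    {s : Set (Fin d → ℝ)} (hs : MeasurableSet s) :
    (volume (Tmap a L '' s)).toReal = (∏ i, L i) * (volume s).toReal := by
  have h1 := Tmap_cov a hL hs (fun _ => (1:ℝ))
  rwa [setIntegral_const, setIntegral_const, smul_eq_mul, mul_one, smul_eq_mul, mul_one] at h1
variable {d k : ℕ}

def subCnat (a L : ℝ) (j r : ℕ) : ℝ :=
  if r ≤ j then L^r * a^(j-r) * (j.choose r) else 0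

lemma one_var (a L t : ℝ) {j n : ℕ} (hj : j ≤ n) :
    (a + L*t)^j = ∑ r : Fin (n+1), subCnat a L j (r:ℕ) * t^(r:ℕ) := by
  rw [Fin.sum_univ_eq_sum_range (fun r => subCnat a L j r * t^r) (n+1)]
  rw [show a + L*t = L*t + a by ring, add_pow]
  rw [show Finset.range (j+1) = Finset.range (j+1) from rfl]
  have hsub : Finset.range (j+1) ⊆ Finset.range (n+1) :=
    Finset.range_subset_range.mpr (Nat.succ_le_succ hj)
  rw [← Finset.sum_subset hsub (fun m _ hm => ?_)]
  · refine Finset.sum_congr rfl fun m hm => ?_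
    rw [Finset.mem_range] at hm
    rw [subCnat, if_pos (Nat.lt_succ_iff.mp hm), mul_pow]
    ring
  · rw [Finset.mem_range, not_lt] at hm
    rw [subCnat, if_neg (by omega), zero_mul]

def hatC (a L : Fin d → ℝ) (c : Idx d k → ℝ) : Idx d k → ℝ :=
  fun g => ∑ m : Idx d k, c m * ∏ i, subCnat (a i) (L i) (m i : ℕ) (g i : ℕ)

lemma ev_comp (a L : Fin d → ℝ) (c : Idx d k → ℝ) (x : Fin d → ℝ) :
    ev d k c (Tmap a L x) = ev d k (hatC a L c) x := by
  rw [ev, ev]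
  have step1 : ∀ m : Idx d k, (∏ i, (Tmap a L x) i ^ (m i : ℕ))
      = ∑ g : Idx d k, ∏ i, (subCnat (a i) (L i) (m i : ℕ) (g i : ℕ) * x i ^ (g i : ℕ)) := by
    intro m
    have : ∀ i, (Tmap a L x) i ^ (m i : ℕ)
        = ∑ r : Fin (k+1), subCnat (a i) (L i) (m i : ℕ) (r:ℕ) * x i ^ (r:ℕ) := fun i =>
      one_var (a i) (L i) (x i) (Nat.lt_succ_iff.mp (m i).isLt)
    rw [Finset.prod_congr rfl fun i _ => this i]
    rw [Finset.prod_univ_sum]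
    rw [Fintype.piFinset_univ]
  calc ∑ m : Idx d k, c m * ∏ i, (Tmap a L x) i ^ (m i : ℕ)
      = ∑ m : Idx d k, ∑ g : Idx d k,
          c m * ∏ i, (subCnat (a i) (L i) (m i : ℕ) (g i : ℕ) * x i ^ (g i : ℕ)) := by
        refine Finset.sum_congr rfl fun m _ => ?_
        rw [step1 m, Finset.mul_sum]
    _ = ∑ g : Idx d k, ∑ m : Idx d k,
          c m * ∏ i, (subCnat (a i) (L i) (m i : ℕ) (g i : ℕ) * x i ^ (g i : ℕ)) :=
        Finset.sum_comm
    _ = ∑ g : Idx d k, hatC a L c g * ∏ i, x i ^ (g i : ℕ) := by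
        refine Finset.sum_congr rfl fun g _ => ?_
        rw [hatC, Finset.sum_mul]
        refine Finset.sum_congr rfl fun m _ => ?_
        rw [Finset.prod_mul_distrib]
        ring

-- Euclidean geometry lemmas
lemma coord_le_dist {d : ℕ} (x y : Euc d) (i : Fin d) : |x i - y i| ≤ dist x y := by
  rw [EuclideanSpace.dist_eq, ← Real.sqrt_sq_eq_abs]
  apply Real.sqrt_le_sqrt
  have h := Finset.single_le_sum (f := fun j => dist (x j) (y j)^2)
    (fun j _ => sq_nonneg _) (Finset.mem_univ i)
  simpa [Real.dist_eq, sq_abs] using h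

lemma box_isBounded {d : ℕ} (a b : Fin d → ℝ) : Bornology.IsBounded (box a b) := by
  rw [Metric.isBounded_iff]
  refine ⟨Real.sqrt (∑ i, (b i - a i)^2), fun x hx y hy => ?_⟩
  rw [EuclideanSpace.dist_eq]
  apply Real.sqrt_le_sqrt
  refine Finset.sum_le_sum fun i _ => ?_
  have hxi := hx i; have hyi := hy i
  have hd : dist (x i) (y i) ≤ b i - a i := by
    rw [Real.dist_eq, abs_le]
    constructor <;> [linarith [hxi.1, hxi.2, hyi.1, hyi.2]; linarith [hxi.1, hxi.2, hyi.1, hyi.2]]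
  exact pow_le_pow_left₀ dist_nonneg hd 2

lemma edge_le_diam {d : ℕ} {a b : Fin d → ℝ} (hab : ∀ i, a i < b i) (i : Fin d) :
    b i - a i ≤ diam (box a b) := by
  refine le_of_forall_pos_le_add fun ε hε => ?_
  set δ := min (ε/2) ((b i - a i)/2) with hδdef
  have hδ : 0 < δ := lt_min (by linarith) (by have := hab i; linarith)
  have hδ2 : δ ≤ (b i - a i)/2 := min_le_right _ _
  have hδε : δ ≤ ε/2 := min_le_left _ _
  set x : Euc d := WithLp.toLp 2 (fun j => if j = i then a i + δ else (a j + b j)/2) with hxdef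
  set y : Euc d := WithLp.toLp 2 (fun j => if j = i then b i - δ else (a j + b j)/2) with hydef
  have hxmem : x ∈ box a b := by
    intro j
    by_cases hj : j = i
    · subst hj
      simp only [hxdef, PiLp.toLp_apply, if_pos rfl, ↓reduceIte]
      constructor
      · linarith
      · have := hab j; linarith
    · simp only [hxdef, PiLp.toLp_apply, if_neg hj]
      have := hab j
      constructor <;> [linarith; linarith]
  have hymem : y ∈ box a b := by
    intro j
    by_cases hj : j = i
    · subst hj
      simp only [hydef, PiLp.toLp_apply, if_pos rfl, ↓reduceIte]
      constructor
      · have := hab j; linarith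
      · linarith
    · simp only [hydef, PiLp.toLp_apply, if_neg hj]
      have := hab j
      constructor <;> [linarith; linarith]
  have hdist : b i - a i - 2*δ ≤ dist x y := by
    have h1 := coord_le_dist x y i
    have h2 : x i = a i + δ := by simp [hxdef]
    have h3 : y i = b i - δ := by simp [hydef]
    rw [h2, h3] at h1
    have h4 : b i - a i - 2*δ ≤ |a i + δ - (b i - δ)| := by
      rw [abs_sub_comm]
      exact le_trans (by linarith) (le_abs_self _)
    linarith
  have h5 := dist_le_diam_of_mem (box_isBounded a b) hxmem hymem
  linarith

/-- Lemma A.4.  Let `θ ∈ (0,1]`.  There exists `C > 0`,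
depending only on `θ`, the polynomial degree `k` and the shape regularity of
the mesh (constant `ρ`), such that for every element `Q` of the parametric
Bézier mesh (an axis-aligned box whose edges are comparable to its diameter
`h = diam Q` with constant `ρ`) and every measurable `S ⊆ Q` with
`|S| ≥ θ |Q|`, one has `‖p‖_{L^∞(Q)} ≤ C h^{-d/2} ‖p‖_{L²(S)}` for every
tensor-product polynomial `p ∈ Q_k(ℝᵈ)`. -/
theorem poly_sup_le_L2_on_large_subset (d k : ℕ) (θ ρ : ℝ)
    (hθ : θ ∈ Ioc (0 : ℝ) 1) (hρ : 0 < ρ) :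
    ∃ C > (0 : ℝ), ∀ a b : Fin d → ℝ, (∀ i, a i < b i) →
      -- shape regularity of the element
      (∀ i, ρ * diam (box a b) ≤ b i - a i) →
      ∀ S : Set (Euc d), MeasurableSet S → S ⊆ box a b →
        θ * (volume (box a b)).toReal ≤ (volume S).toReal →
        ∀ f : Euc d → ℝ, IsQPoly k f →
          ∀ x ∈ box a b,
            |f x| ≤ C * diam (box a b) ^ (-(d : ℝ) / 2) *
              Real.sqrt (∫ y in S, f y ^ 2) := by
  obtain ⟨hθ0, hθ1⟩ := hθ
  have hzero : ∀ c : Idx d k → ℝ, c ≠ 0 →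
      volume {x : Fin d → ℝ | ev d k c x = 0} = 0 := by
    intro c hc
    have h := mv_zero_set_null d (toPoly d k c) (toPoly_ne_zero hc)
    have hset : {x : Fin d → ℝ | MvPolynomial.eval x (toPoly d k c) = 0}
        = {x : Fin d → ℝ | ev d k c x = 0} := by
      ext x; rw [Set.mem_setOf_eq, Set.mem_setOf_eq, eval_toPoly]
    rwa [hset] at h
  obtain ⟨ε, hε, hunit⟩ := unit_cube_bound d k θ hθ0 hθ1 hzero
  set N : ℝ := (Fintype.card (Idx d k) : ℝ) with hNdef
  have hN : 0 < N := by
    rw [hNdef]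
    exact_mod_cast (Fintype.card_pos : 0 < Fintype.card (Idx d k))
  have hsε : 0 < Real.sqrt ε := Real.sqrt_pos.mpr hε
  refine ⟨(N / Real.sqrt ε) * ρ ^ (-(d : ℝ) / 2), by
    apply mul_pos (div_pos hN hsε) (Real.rpow_pos_of_pos hρ _), ?_⟩
  intro a b hab hreg S hSmeas hSsub hSθ f hf x hx
  set L : Fin d → ℝ := fun i => b i - a i with hLdef
  have hL : ∀ i, 0 < L i := fun i => sub_pos.mpr (hab i)
  set h := diam (box a b) with hhdef
  have hh0 : 0 ≤ h := diam_nonneg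
  -- pi-space versions
  set e := (MeasurableEquiv.toLp 2 (Fin d → ℝ)).symm with hedef
  set boxp : Set (Fin d → ℝ) := Set.pi Set.univ fun i => Ioo (a i) (b i) with hboxp
  have hboxp_meas : MeasurableSet boxp := MeasurableSet.univ_pi fun i => measurableSet_Ioo
  have hbox_pre : box a b = e ⁻¹' boxp := by
    ext z; simp only [box, Set.mem_setOf_eq, Set.mem_preimage, hboxp, Set.mem_pi,
      Set.mem_univ, forall_true_left]
    rfl
  have hbox_meas : MeasurableSet (box a b) := by
    rw [hbox_pre]; exact e.measurable hboxp_meas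
  have hmp : MeasurePreserving (⇑e.symm) volume volume :=
    (EuclideanSpace.volume_preserving_symm_measurableEquiv_toLp (Fin d)).symm e
  have hmap : (volume : Measure (Euc d)) = Measure.map e.symm volume := hmp.map_eq.symm
  have hvol_eq : ∀ A : Set (Euc d), MeasurableSet A →
      volume A = volume (e.symm ⁻¹' A : Set (Fin d → ℝ)) := by
    intro A hA
    rw [hmap, Measure.map_apply e.symm.measurable hA]
  -- volume of the box
  have hLprod_pos : 0 < ∏ i, L i := Finset.prod_pos fun i _ => hL i
  have hvol_boxp : volume boxp = ENNReal.ofReal (∏ i, L i) := by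
    rw [hboxp, volume_pi_pi, ENNReal.ofReal_prod_of_nonneg fun i _ => (hL i).le]
    exact Finset.prod_congr rfl fun i _ => Real.volume_Ioo
  have hpre_box : (e.symm ⁻¹' (box a b) : Set (Fin d → ℝ)) = boxp := by
    ext z; simp only [Set.mem_preimage, box, Set.mem_setOf_eq, hboxp, Set.mem_pi,
      Set.mem_univ, forall_true_left]
    rfl
  have hvol_box : (volume (box a b)).toReal = ∏ i, L i := by
    rw [hvol_eq _ hbox_meas, hpre_box, hvol_boxp, ENNReal.toReal_ofReal hLprod_pos.le]
  -- the set S in pi space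
  set Sp : Set (Fin d → ℝ) := e.symm ⁻¹' S with hSp
  have hSp_meas : MeasurableSet Sp := e.symm.measurable hSmeas
  have hSp_sub : Sp ⊆ boxp := by
    intro z hz
    have hzb := hSsub hz
    simp only [hboxp, Set.mem_pi, Set.mem_univ, forall_true_left]
    exact fun i => hzb i
  have hvolS : (volume S).toReal = (volume Sp).toReal := by rw [hvol_eq _ hSmeas]
  -- preimage under scaling
  have hTcont : Continuous (Tmap a L) := by
    refine continuous_pi fun i => ?_
    exact continuous_const.add (continuous_const.mul (continuous_apply i))
  set Sh : Set (Fin d → ℝ) := Tmap a L ⁻¹' Sp with hSh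
  have hSh_meas : MeasurableSet Sh := hTcont.measurable hSp_meas
  have hSh_sub : Sh ⊆ ucube d := by
    intro z hz
    have hzb := hSp_sub hz
    rw [mem_ucube]
    intro i
    have h1 : Tmap a L z i ∈ Ioo (a i) (b i) := by
      have := hzb
      simp only [hboxp, Set.mem_pi, Set.mem_univ, forall_true_left] at this
      exact this i
    obtain ⟨h2, h3⟩ := h1
    simp only [Tmap] at h2 h3
    have hLi' : L i = b i - a i := rfl
    constructor
    · exact (mul_lt_mul_iff_right₀ (hL i)).mp (by linarith : L i * 0 < L i * z i)
    · exact (mul_lt_mul_iff_right₀ (hL i)).mp (by linarith : L i * z i < L i * 1)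
  have himg : Tmap a L '' Sh = Sp := Set.image_preimage_eq Sp (Tmap_surj hL a)
  -- volume of Sh
  have hvol_Sh : θ ≤ (volume Sh).toReal := by
    have h1 : (volume Sp).toReal = (∏ i, L i) * (volume Sh).toReal := by
      rw [← himg]; exact Tmap_vol a hL hSh_meas
    have h2 : θ * (∏ i, L i) ≤ (∏ i, L i) * (volume Sh).toReal := by
      calc θ * (∏ i, L i) = θ * (volume (box a b)).toReal := by rw [hvol_box]
        _ ≤ (volume S).toReal := hSθ
        _ = (volume Sp).toReal := hvolS
        _ = (∏ i, L i) * (volume Sh).toReal := h1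
    exact le_of_mul_le_mul_left (by linarith) hLprod_pos
  -- polynomial data
  obtain ⟨P, hdeg, hfP⟩ := hf
  obtain ⟨c, hc⟩ := exists_repr hdeg
  have hfc : ∀ y : Fin d → ℝ, f (e.symm y) = ev d k c y := by
    intro y
    rw [hfP (e.symm y), ← hc, ← eval_toPoly]
    rfl
  -- integral identity
  have hint_transfer : ∫ y in S, f y ^ 2 = ∫ y in Sp, f (e.symm y) ^ 2 := by
    rw [hmap, Measure.restrict_map e.symm.measurable hSmeas]
    rw [integral_map_equiv e.symm (fun y => f y ^ 2)]
  have hI : ∫ y in S, f y ^ 2 = (∏ i, L i) * ∫ z in Sh, ev d k (hatC a L c) z ^ 2 := by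
    rw [hint_transfer, ← himg, Tmap_cov a hL hSh_meas (fun y => f (e.symm y) ^ 2)]
    congr 1
    refine integral_congr_ae (Filter.Eventually.of_forall fun z => ?_)
    show f (e.symm (Tmap a L z)) ^ 2 = ev d k (hatC a L c) z ^ 2
    rw [hfc (Tmap a L z), ev_comp a L c z]
  -- unit cube bound
  have hUB := hunit (hatC a L c) Sh hSh_meas hSh_sub hvol_Sh
  set I := ∫ z in Sh, ev d k (hatC a L c) z ^ 2 with hIdef
  have hI0 : 0 ≤ I := integral_nonneg fun z => sq_nonneg _
  -- the evaluation point
  set xh : Fin d → ℝ := fun i => (x i - a i) / L i with hxh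
  have hxh_cube : xh ∈ ucube d := by
    rw [mem_ucube]
    intro i
    have h1 := hx i
    have hLi := hL i
    constructor
    · exact div_pos (by linarith [h1.1]) hLi
    · rw [div_lt_one hLi]
      have h2 := h1.2
      show x i - a i < L i
      simp only [hLdef]
      linarith
  have hTxh : Tmap a L xh = fun i => x i := by
    funext i
    simp only [Tmap, hxh]
    have hLi := (hL i).ne'
    field_simp
    ring
  have hfx : f x = ev d k (hatC a L c) xh := by
    have h1 : f x = ev d k c (fun i => x i) := by rw [hfP x, ← hc, eval_toPoly]
    rw [h1, show (fun i => x i) = Tmap a L xh from hTxh.symm, ev_comp a L c xh]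
  -- numeric chain
  have habs : |f x| ≤ N * ‖hatC a L c‖ := by rw [hfx]; exact abs_ev_le (hatC a L c) hxh_cube
  have hnorm : Real.sqrt ε * ‖hatC a L c‖ ≤ Real.sqrt I := by
    have := Real.sqrt_le_sqrt hUB
    rwa [Real.sqrt_mul hε.le, Real.sqrt_sq (norm_nonneg _)] at this
  have hJ : Real.sqrt (∫ y in S, f y ^ 2) = Real.sqrt (∏ i, L i) * Real.sqrt I := by
    rw [hI, Real.sqrt_mul hLprod_pos.le]
  have hsqL : 0 < Real.sqrt (∏ i, L i) := Real.sqrt_pos.mpr hLprod_pos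
  -- key geometric inequality
  have hgeom : (Real.sqrt (∏ i, L i))⁻¹ ≤ ρ ^ (-(d : ℝ)/2) * h ^ (-(d : ℝ)/2) := by
    rcases Nat.eq_zero_or_pos d with hd | hd
    · subst hd
      simp only [Nat.cast_zero, neg_zero, zero_div, Real.rpow_zero, mul_one]
      rw [show (∏ i : Fin 0, L i) = 1 from Finset.prod_empty]
      simp
    · have hh_pos : 0 < h := by
        have hi : (0 : ℝ) < b ⟨0, hd⟩ - a ⟨0, hd⟩ := sub_pos.mpr (hab _)
        have h2 : b ⟨0, hd⟩ - a ⟨0, hd⟩ ≤ h := by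
          rw [hhdef]; exact edge_le_diam hab _
        linarith
      have hρh : 0 < ρ * h := mul_pos hρ hh_pos
      have hkey : (ρ * h) ^ d ≤ ∏ i, L i := by
        calc (ρ * h) ^ d = ∏ _i : Fin d, (ρ * h) := by
              rw [Finset.prod_const, Finset.card_univ, Fintype.card_fin]
          _ ≤ ∏ i, L i := Finset.prod_le_prod (fun i _ => hρh.le) fun i _ => by
              have := hreg i
              exact this
      have h1 : (∏ i, L i) ^ (-(1:ℝ)/2) ≤ ((ρ*h)^d) ^ (-(1:ℝ)/2) :=
        Real.rpow_le_rpow_of_nonpos (pow_pos hρh d) hkey (by norm_num)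
      have h2 : (Real.sqrt (∏ i, L i))⁻¹ = (∏ i, L i) ^ (-(1:ℝ)/2) := by
        rw [Real.sqrt_eq_rpow, ← Real.rpow_neg hLprod_pos.le]
        norm_num
      calc (Real.sqrt (∏ i, L i))⁻¹ = (∏ i, L i) ^ (-(1:ℝ)/2) := h2
        _ ≤ ((ρ*h)^d) ^ (-(1:ℝ)/2) := h1
        _ = (ρ*h) ^ (-(d:ℝ)/2) := by
            rw [← Real.rpow_natCast (ρ*h) d, ← Real.rpow_mul hρh.le]
            rw [show (d:ℝ) * (-(1:ℝ)/2) = -(d:ℝ)/2 by ring]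
        _ = ρ ^ (-(d:ℝ)/2) * h ^ (-(d:ℝ)/2) := Real.mul_rpow hρ.le hh0
  -- final chain
  calc |f x| ≤ N * ‖hatC a L c‖ := habs
    _ ≤ N * ((Real.sqrt ε)⁻¹ * Real.sqrt I) := by
        have hch : ‖hatC a L c‖ ≤ (Real.sqrt ε)⁻¹ * Real.sqrt I := by
          rw [← div_eq_inv_mul, le_div_iff₀ hsε]
          calc ‖hatC a L c‖ * Real.sqrt ε = Real.sqrt ε * ‖hatC a L c‖ := mul_comm _ _
            _ ≤ Real.sqrt I := hnorm
        exact mul_le_mul_of_nonneg_left hch hN.le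
    _ = (N / Real.sqrt ε) * Real.sqrt I := by ring
    _ = (N / Real.sqrt ε) * ((Real.sqrt (∏ i, L i))⁻¹ * Real.sqrt (∫ y in S, f y ^ 2)) := by
        rw [hJ]
        field_simp
    _ ≤ (N / Real.sqrt ε) * ((ρ ^ (-(d : ℝ)/2) * h ^ (-(d : ℝ)/2)) * Real.sqrt (∫ y in S, f y ^ 2)) := by
        have hs0 : 0 ≤ Real.sqrt (∫ y in S, f y ^ 2) := Real.sqrt_nonneg _
        have hNε : 0 ≤ N / Real.sqrt ε := le_of_lt (div_pos hN hsε)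
        apply mul_le_mul_of_nonneg_left _ hNε
        exact mul_le_mul_of_nonneg_right hgeom hs0
    _ = (N / Real.sqrt ε) * ρ ^ (-(d : ℝ)/2) * h ^ (-(d : ℝ)/2) * Real.sqrt (∫ y in S, f y ^ 2) := by
        ring

end
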